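/- Let $R^{(0)},R^{(1)},\dots,R^{(K)}$ be exchangeable real-valued random variables (in particular, i.i.d.), and let $\delta\in(0,1)$ with $(K+1)(1-\delta)\le K$. Define $C := \mathrm{Quantile}_{(1+1/K)(1-\delta)}(R^{(1)},\dots,R^{(K)})$, the $1/K$-corrected empirical quantile of the calibration scores. Then $\mathrm{Prob}(R^{(0)}\le C)\ge 1-\delta$. -/

import Mathlib

open MeasureTheory ProbabilityTheory Finset
open scoped ProbabilityTheory ENNReal NNReal

lemma rank_count {n m : ℕ} (hm : m ≤ n) (x : Fin n → ℝ) :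
    m ≤ (Finset.univ.filter (fun j : Fin n =>
      (Finset.univ.filter (fun i => x i < x j)).card < m)).card := by
  set key : Fin n → ℝ ×ₗ ℕ := fun i => toLex (x i, (i : ℕ)) with hkey
  set r : Fin n → ℕ := fun j => (Finset.univ.filter (fun i => key i < key j)).card with hr
  have hmono : ∀ i j, key i < key j → r i < r j := by
    intro i j hij
    apply Finset.card_lt_card
    constructor
    · intro k hk
      simp only [mem_filter, mem_univ, true_and] at hk ⊢
      exact hk.trans hij
    · intro hsub
      have hi : i ∈ Finset.univ.filter (fun k => key k < key j) := by
        simp [hij]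
      have := hsub hi
      simp only [mem_filter, mem_univ, true_and] at this
      exact absurd this (lt_irrefl _)
  have hkeyinj : Function.Injective key := by
    intro i j h
    have : ((x i, (i : ℕ)) : ℝ × ℕ) = (x j, (j : ℕ)) := toLex.injective h
    exact Fin.ext (congrArg Prod.snd this)
  have hrinj : Function.Injective r := by
    intro i j h
    by_contra hne
    rcases lt_or_gt_of_ne (fun hk => hne (hkeyinj hk)) with h1 | h1
    · exact absurd h (ne_of_lt (hmono _ _ h1))
    · exact absurd h.symm (ne_of_lt (hmono _ _ h1))
  have hrlt : ∀ j, r j < n := by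
    intro j
    have : (Finset.univ.filter (fun i => key i < key j)) ⊂ Finset.univ := by
      refine Finset.ssubset_univ_iff.mpr ?_
      intro hEq
      have := Finset.eq_univ_iff_forall.mp hEq j
      simp at this
    simpa [Fintype.card_fin] using Finset.card_lt_card this
  have himg : Finset.image r Finset.univ = Finset.range n := by
    apply Finset.eq_of_subset_of_card_le
    · intro a ha
      simp only [mem_image] at ha
      obtain ⟨j, _, rfl⟩ := ha
      exact Finset.mem_range.mpr (hrlt j)
    · rw [Finset.card_image_of_injective _ hrinj]
      simp
  have hcard : (Finset.univ.filter (fun j => r j < m)).card = m := by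
    have h1 : (Finset.univ.filter (fun j => r j < m)).image r
        = (Finset.range n).filter (· < m) := by
      rw [← himg, Finset.filter_image]
    have h2 : (Finset.range n).filter (· < m) = Finset.range m := by
      ext a
      simp only [mem_filter, mem_range]
      omega
    have := congrArg Finset.card (h1.trans h2)
    rwa [Finset.card_image_of_injective _ hrinj, Finset.card_range] at this
  refine le_trans hcard.ge (Finset.card_le_card ?_)
  intro j hj
  simp only [mem_filter, mem_univ, true_and] at hj ⊢
  refine lt_of_le_of_lt ?_ hj
  apply Finset.card_le_card
  intro i hi
  simp only [mem_filter, mem_univ, true_and] at hi ⊢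
  exact Prod.Lex.lt_iff.mpr (Or.inl hi)


/-- split conformal prediction coverage for exchangeable scores
`R⁽⁰⁾, …, R⁽ᴷ⁾` (index `0` is the test score, indices `1..K` the calibration
scores): with `C` the `(1+1/K)(1-δ)` empirical quantile of the calibration
scores, `Prob(R⁽⁰⁾ ≤ C) ≥ 1 - δ`. -/
theorem stmt1 {Ω : Type*} [MeasureSpace Ω] [IsProbabilityMeasure (ℙ : Measure Ω)]
    (K : ℕ) (hK : 0 < K) (R : Fin (K + 1) → Ω → ℝ)
    (hmeas : ∀ i, Measurable (R i))
    (hexch : ∀ σ : Equiv.Perm (Fin (K + 1)),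
      Measure.map (fun ω => fun i => R (σ i) ω) ℙ = Measure.map (fun ω => fun i => R i ω) ℙ)
    (δ : ℝ) (hδ : 0 < δ ∧ δ < 1) (hKδ : ((K : ℝ) + 1) * (1 - δ) ≤ K) :
    ℙ {ω | R 0 ω ≤ sInf {z : ℝ | (1 + 1 / (K : ℝ)) * (1 - δ) ≤
        ((Finset.univ.filter (fun i : Fin K => R i.succ ω ≤ z)).card : ℝ) / K}} ≥
      ENNReal.ofReal (1 - δ) := by
  have hKpos : (0 : ℝ) < K := by exact_mod_cast hK
  set m : ℕ := ⌈((K : ℝ) + 1) * (1 - δ)⌉₊ with hm_def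
  have hmK : m ≤ K := by
    rw [hm_def, Nat.ceil_le]
    exact_mod_cast hKδ
  have hmK1 : m ≤ K + 1 := hmK.trans (Nat.le_succ K)
  -- measurable sets A j
  have hA : ∀ j : Fin (K + 1), MeasurableSet {x : Fin (K + 1) → ℝ |
      (Finset.univ.filter (fun i => x i < x j)).card < m} := by
    intro j
    have hF : Measurable (fun x : Fin (K + 1) → ℝ =>
        (Finset.univ.filter (fun i => x i < x j)).card) := by
      simp only [Finset.card_filter]
      apply Finset.measurable_sum
      intro i _
      exact Measurable.ite (measurableSet_lt (measurable_pi_apply i) (measurable_pi_apply j))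
        measurable_const measurable_const
    exact hF (measurableSet_Iio (a := m))
  set u : Ω → (Fin (K + 1) → ℝ) := fun ω i => R i ω with hu_def
  have hu : Measurable u := measurable_pi_lambda _ hmeas
  set E : Fin (K + 1) → Set Ω := fun j =>
    {ω | (Finset.univ.filter (fun i => R i ω < R j ω)).card < m} with hE_def
  have hEmeas : ∀ j, MeasurableSet (E j) := fun j => hu (hA j)
  -- exchangeability: all E j have the same measure
  have hEq : ∀ j : Fin (K + 1), ℙ (E j) = ℙ (E 0) := by
    intro j
    set σ : Equiv.Perm (Fin (K + 1)) := Equiv.swap 0 j with hσ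
    set v : Ω → (Fin (K + 1) → ℝ) := fun ω i => R (σ i) ω with hv_def
    have hv : Measurable v := measurable_pi_lambda _ (fun i => hmeas (σ i))
    have h1 : v ⁻¹' {x : Fin (K + 1) → ℝ |
        (Finset.univ.filter (fun i => x i < x 0)).card < m} = E j := by
      ext ω
      simp only [Set.mem_preimage, Set.mem_setOf_eq, hE_def, hv_def]
      have hσ0 : σ 0 = j := Equiv.swap_apply_left 0 j
      have hcard : (Finset.univ.filter (fun i => R (σ i) ω < R (σ 0) ω)).card
          = (Finset.univ.filter (fun i => R i ω < R j ω)).card := by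
        apply Finset.card_equiv σ
        intro i
        simp [hσ0]
      rw [hcard]
    have h2 : ℙ (v ⁻¹' {x : Fin (K + 1) → ℝ |
        (Finset.univ.filter (fun i => x i < x 0)).card < m})
        = ℙ (u ⁻¹' {x : Fin (K + 1) → ℝ |
        (Finset.univ.filter (fun i => x i < x 0)).card < m}) := by
      rw [← Measure.map_apply hv (hA 0), ← Measure.map_apply hu (hA 0)]
      rw [hexch σ]
    rw [← h1, h2]
    rfl
  -- the sum bound
  have hsum : ∀ ω : Ω, (m : ℝ≥0∞) ≤ ∑ j : Fin (K + 1), ((E j).indicator 1 ω) := by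
    intro ω
    have h1 : ∑ j : Fin (K + 1), (E j).indicator (1 : Ω → ℝ≥0∞) ω
        = ((Finset.univ.filter (fun j : Fin (K + 1) => ω ∈ E j)).card : ℝ≥0∞) := by
      rw [Finset.card_filter]
      push_cast
      apply Finset.sum_congr rfl
      intro j _
      simp [Set.indicator_apply]
    rw [h1]
    have := rank_count (n := K + 1) (m := m) hmK1 (fun i => R i ω)
    exact_mod_cast this
  -- integrate
  have hkey : (m : ℝ≥0∞) ≤ (K + 1 : ℝ≥0∞) * ℙ (E 0) := by
    have h1 : (m : ℝ≥0∞) = ∫⁻ _, (m : ℝ≥0∞) ∂(ℙ : Measure Ω) := by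
      rw [lintegral_const, measure_univ, mul_one]
    rw [h1]
    calc ∫⁻ _, (m : ℝ≥0∞) ∂(ℙ : Measure Ω)
        ≤ ∫⁻ ω, ∑ j : Fin (K + 1), (E j).indicator 1 ω ∂ℙ := lintegral_mono hsum
      _ = ∑ j : Fin (K + 1), ∫⁻ ω, (E j).indicator 1 ω ∂ℙ :=
          lintegral_finset_sum _ (fun j _ => measurable_one.indicator (hEmeas j))
      _ = ∑ _j : Fin (K + 1), ℙ (E 0) := by
          apply Finset.sum_congr rfl
          intro j _
          rw [lintegral_indicator_one (hEmeas j), hEq j]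
      _ = (K + 1 : ℝ≥0∞) * ℙ (E 0) := by
          rw [Finset.sum_const, Finset.card_univ, Fintype.card_fin, nsmul_eq_mul]
          push_cast
          ring
  have hP : ENNReal.ofReal (1 - δ) ≤ ℙ (E 0) := by
    have hne : (K + 1 : ℝ≥0∞) ≠ 0 := by
      simp
    have hnt : (K + 1 : ℝ≥0∞) ≠ ⊤ := by
      simp [ENNReal.add_eq_top, ENNReal.natCast_ne_top]
    rw [← ENNReal.mul_le_mul_iff_right hne hnt]
    refine le_trans ?_ hkey
    have h1 : (K + 1 : ℝ≥0∞) * ENNReal.ofReal (1 - δ)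
        = ENNReal.ofReal (((K : ℝ) + 1) * (1 - δ)) := by
      rw [ENNReal.ofReal_mul (by positivity)]
      congr 1
      rw [← ENNReal.ofReal_natCast K, ← ENNReal.ofReal_one, ← ENNReal.ofReal_add] <;>
        positivity
    rw [h1]
    calc ENNReal.ofReal (((K : ℝ) + 1) * (1 - δ))
        ≤ ENNReal.ofReal (m : ℝ) := ENNReal.ofReal_le_ofReal (Nat.le_ceil _)
      _ = (m : ℝ≥0∞) := ENNReal.ofReal_natCast m
  -- inclusion
  refine le_trans hP (measure_mono ?_)
  intro ω hω
  simp only [hE_def, Set.mem_setOf_eq] at hω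
  -- rewrite the card over Fin (K+1) as card over Fin K
  have hcard0 : (Finset.univ.filter (fun i : Fin (K + 1) => R i ω < R 0 ω)).card
      = (Finset.univ.filter (fun i : Fin K => R i.succ ω < R 0 ω)).card := by
    rw [Finset.card_filter, Finset.card_filter, Fin.sum_univ_succ]
    simp
  rw [hcard0] at hω
  simp only [Set.mem_setOf_eq]
  have hKne : (K : ℝ) ≠ 0 := ne_of_gt hKpos
  -- the quantile set
  set S : Set ℝ := {z : ℝ | (1 + 1 / (K : ℝ)) * (1 - δ) ≤
      ((Finset.univ.filter (fun i : Fin K => R i.succ ω ≤ z)).card : ℝ) / K} with hS_def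
  have hSne : S.Nonempty := by
    have hFinK : Nonempty (Fin K) := ⟨⟨0, hK⟩⟩
    have hne' : (Finset.univ : Finset (Fin K)).Nonempty := Finset.univ_nonempty
    refine ⟨Finset.univ.sup' hne' (fun i : Fin K => R i.succ ω), ?_⟩
    have hall : Finset.univ.filter (fun i : Fin K =>
        R i.succ ω ≤ Finset.univ.sup' hne' (fun i : Fin K => R i.succ ω)) = Finset.univ := by
      apply Finset.eq_univ_iff_forall.mpr
      intro i
      simp only [Finset.mem_filter, Finset.mem_univ, true_and]
      exact Finset.le_sup' (fun i : Fin K => R i.succ ω) (Finset.mem_univ i)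
    have h1 : (1 + 1 / (K : ℝ)) * (1 - δ) ≤ 1 := by
      have hinv : (1 / (K : ℝ)) * K = 1 := by field_simp
      nlinarith [hKδ]
    simp only [hS_def, Set.mem_setOf_eq, hall, Finset.card_univ, Fintype.card_fin]
    rw [div_self hKne]
    exact h1
  apply le_csInf hSne
  intro z hz
  simp only [hS_def, Set.mem_setOf_eq] at hz
  have hcount : ((K : ℝ) + 1) * (1 - δ)
      ≤ ((Finset.univ.filter (fun i : Fin K => R i.succ ω ≤ z)).card : ℝ) := by
    have h2 := mul_le_mul_of_nonneg_right hz (le_of_lt hKpos)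
    rw [div_mul_cancel₀ _ hKne] at h2
    have h3 : (1 + 1 / (K : ℝ)) * (1 - δ) * K = ((K : ℝ) + 1) * (1 - δ) := by
      field_simp
    linarith [h2, h3.symm.le, h3.le]
  have hmcount : m ≤ (Finset.univ.filter (fun i : Fin K => R i.succ ω ≤ z)).card := by
    rw [hm_def, Nat.ceil_le]
    exact_mod_cast hcount
  -- find a calibration point ≥ R 0 ω and ≤ z
  by_contra hzlt
  push_neg at hzlt
  have hsub : Finset.univ.filter (fun i : Fin K => R i.succ ω ≤ z)
      ⊆ Finset.univ.filter (fun i : Fin K => R i.succ ω < R 0 ω) := by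
    intro i hi
    simp only [Finset.mem_filter, Finset.mem_univ, true_and] at hi ⊢
    exact lt_of_le_of_lt hi hzlt
  have := Finset.card_le_card hsub
  omega
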